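/- Let G be a group with its profinite topology. Every subset of G that is clopen in the profinite topology is strongly generic. -/

import Mathlib

open Pointwise

variable {G : Type*} [Group G]

/-- A subset `S ⊆ G` is generic if finitely many left translates of `S` cover `G`. -/
def Generic (S : Set G) : Prop :=
  ∃ s : Finset G, (Set.univ : Set G) ⊆ ⋃ g ∈ s, g • S

/-- The `G`-algebra of subsets of `G` generated by `A`: the closure of `{A}` under
complement, finite union and left translation. -/
inductive GAlg (A : Set G) : Set G → Prop
  | base : GAlg A A
  | compl {B : Set G} : GAlg A B → GAlg A Bᶜ
  | union {B C : Set G} : GAlg A B → GAlg A C → GAlg A (B ∪ C)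
  | smul (g : G) {B : Set G} : GAlg A B → GAlg A (g • B)

/-- `A` is strongly generic if every nonempty set in the `G`-algebra generated by `A`
is generic. -/
def StronglyGeneric (A : Set G) : Prop :=
  ∀ B : Set G, GAlg A B → B.Nonempty → Generic B

/-- The profinite topology on `G`, generated by the cosets of finite index subgroups. -/
def profiniteTopology (G : Type*) [Group G] : TopologicalSpace G :=
  TopologicalSpace.generateFrom
    {S : Set G | ∃ (H : Subgroup G) (g : G), H.FiniteIndex ∧ S = g • (H : Set G)}

lemma smul_open {g : G} {S : Set G} (hS : @IsOpen G (profiniteTopology G) S) :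
    @IsOpen G (profiniteTopology G) (g • S) := by
  letI : TopologicalSpace G := profiniteTopology G
  induction hS with
  | basic s hs =>
      obtain ⟨H, h, hH, rfl⟩ := hs
      exact TopologicalSpace.GenerateOpen.basic _ ⟨H, g * h, hH, smul_smul g h _⟩
  | univ => rw [Set.smul_set_univ]; exact TopologicalSpace.GenerateOpen.univ
  | inter s t _ _ ihs iht => rw [Set.smul_set_inter]; exact ihs.inter iht
  | sUnion S _ ih =>
      rw [Set.smul_set_sUnion]
      exact isOpen_biUnion fun s hs => ih s hs

lemma smul_clopen {g : G} {S : Set G} (hS : @IsClopen G (profiniteTopology G) S) :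
    @IsClopen G (profiniteTopology G) (g • S) := by
  letI : TopologicalSpace G := profiniteTopology G
  constructor
  · rw [← isOpen_compl_iff, ← Set.smul_set_compl]
    exact smul_open hS.1.isOpen_compl
  · exact smul_open hS.2

lemma open_contains_coset {S : Set G} (hS : @IsOpen G (profiniteTopology G) S) :
    ∀ x ∈ S, ∃ H : Subgroup G, H.FiniteIndex ∧ x • (H : Set G) ⊆ S := by
  induction hS with
  | basic s hs =>
      obtain ⟨H, g, hH, rfl⟩ := hs
      intro x hx
      refine ⟨H, hH, ?_⟩
      rintro _ ⟨h, hh, rfl⟩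
      rw [Set.mem_smul_set_iff_inv_smul_mem] at hx ⊢
      simpa [mul_assoc] using mul_mem hx hh
  | univ => exact fun x _ => ⟨⊤, Subgroup.instFiniteIndexTop, fun _ _ => trivial⟩
  | inter s t _ _ ihs iht =>
      intro x hx
      obtain ⟨H, hH, hHs⟩ := ihs x hx.1
      obtain ⟨K, hK, hKt⟩ := iht x hx.2
      refine ⟨H ⊓ K, inferInstance, fun y hy => ?_⟩
      obtain ⟨h, hh, rfl⟩ := hy
      exact ⟨hHs ⟨h, hh.1, rfl⟩, hKt ⟨h, hh.2, rfl⟩⟩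
  | sUnion S _ ih =>
      rintro x ⟨s, hs, hx⟩
      obtain ⟨H, hH, hsub⟩ := ih s hs x hx
      exact ⟨H, hH, hsub.trans (Set.subset_sUnion_of_mem hs)⟩

lemma generic_of_coset {B : Set G} {H : Subgroup G} (hH : H.FiniteIndex) {x : G}
    (hsub : x • (H : Set G) ⊆ B) : Generic B := by
  classical
  haveI : Finite (G ⧸ H) := H.finite_quotient_of_finiteIndex
  haveI : Fintype (G ⧸ H) := Fintype.ofFinite _
  refine ⟨(Finset.univ : Finset (G ⧸ H)).image
    (fun q => Quotient.out q * x⁻¹), fun z _ => ?_⟩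
  refine Set.mem_iUnion₂.2 ⟨Quotient.out (QuotientGroup.mk z : G ⧸ H) * x⁻¹,
    Finset.mem_image.2 ⟨_, Finset.mem_univ _, rfl⟩, ?_⟩
  have h1 : (QuotientGroup.mk (Quotient.out (QuotientGroup.mk z : G ⧸ H)) : G ⧸ H)
      = QuotientGroup.mk z := Quotient.out_eq' _
  have h2 : (Quotient.out (QuotientGroup.mk z : G ⧸ H))⁻¹ * z ∈ H := by
    rwa [QuotientGroup.eq] at h1
  have : z ∈ (Quotient.out (QuotientGroup.mk z : G ⧸ H) * x⁻¹) • (x • (H : Set G)) := by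
    rw [smul_smul]
    exact ⟨_, h2, by simp only [smul_eq_mul]; group⟩
  exact Set.smul_set_mono hsub this

theorem stmt11 (A : Set G) (hA : @IsClopen G (profiniteTopology G) A) :
    StronglyGeneric A := by
  letI : TopologicalSpace G := profiniteTopology G
  have clop : ∀ B : Set G, GAlg A B → @IsClopen G (profiniteTopology G) B := by
    intro B hB
    induction hB with
    | base => exact hA
    | compl _ ih => exact ih.compl
    | union _ _ ih1 ih2 => exact ih1.union ih2
    | smul g _ ih => exact smul_clopen ih
  intro B hB ⟨x, hx⟩
  obtain ⟨H, hH, hsub⟩ := open_contains_coset (clop B hB).2 x hx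
  exact generic_of_coset hH hsub
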